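/- For any LRU stack-depth distribution s and buffer capacity C, the stochastic competitive ratio χ[s] = M^LPR[s] / M^OPT[s] between the expected miss rate of the optimal online policy LPR and that of OPT satisfies χ[s] = O(ln C). Moreover, if M^LPR[s] ≥ 1/C, then χ[s] = O(ln(1/M^LPR[s])). -/

import Mathlib

/-- Cumulative stack-depth distribution `S(j) = ∑_{i=1}^j s i`. -/
noncomputable def cumS (s : ℕ → ℝ) (j : ℕ) : ℝ :=
  ∑ i ∈ Finset.Icc 1 j, s i

/-- `L^OPT = max_{G ∈ {1,…,V-C}} G · (∑_{j=0}^{C+G-1} 1/(1-S(j)))⁻¹`,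
a lower bound on the OPT miss rate. -/
noncomputable def LOPTc (S : ℕ → ℝ) (V C : ℕ) : ℝ :=
  sSup ((fun G : ℕ => (G : ℝ) / ∑ j ∈ Finset.range (C + G), 1 / (1 - S j))
    '' Set.Icc 1 (V - C))

/-- Miss rate of the LPR policy: the optimum over the `K-L` policies,
`M^LPR[s] = min_{1 ≤ K < C ≤ L ≤ V} 1 - [S(K)(L-C) + S(L)(C-K)]/(L-K)`. -/
noncomputable def MLPR (s : ℕ → ℝ) (V C : ℕ) : ℝ :=
  sInf {x : ℝ | ∃ K L : ℕ, 1 ≤ K ∧ K < C ∧ C ≤ L ∧ L ≤ V ∧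
    x = 1 - (cumS s K * ((L : ℝ) - C) + cumS s L * ((C : ℝ) - K)) / ((L : ℝ) - K)}

lemma aux_one_div_le_log {x : ℝ} (hx : 0 < x) :
    1 / (x + 1) ≤ Real.log (x + 1) - Real.log x := by
  have h1 : Real.log (x / (x + 1)) ≤ x / (x + 1) - 1 :=
    Real.log_le_sub_one_of_pos (by positivity)
  have h2 : Real.log (x / (x + 1)) = Real.log x - Real.log (x + 1) :=
    Real.log_div (ne_of_gt hx) (by positivity)
  have h3 : x / (x + 1) - 1 = -(1 / (x + 1)) := by field_simp; ring
  rw [h2, h3] at h1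
  linarith

lemma aux_harm (A : ℝ) (hA : 1 ≤ A) :
    ∀ n : ℕ, ∑ t ∈ Finset.Ico 1 (n + 1), 1 / (A + t) ≤ Real.log (A + n) - Real.log A := by
  intro n
  induction n with
  | zero => simp
  | succ n ih =>
    rw [Finset.sum_Ico_succ_top (by omega)]
    have hx : (0:ℝ) < A + n := by positivity
    have h := aux_one_div_le_log hx
    push_cast
    have e : A + (↑n + 1) = A + ↑n + 1 := by ring
    rw [e]
    linarith

set_option maxHeartbeats 2000000 in
/-- The stochastic competitive ratio `χ[s] = M^LPR[s]/M^OPT[s]` is `O(ln C)` for every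
stack distribution `s` and capacity `C`; moreover, if `M^LPR[s] ≥ 1/C`, then
`χ[s] = O(ln(1/M^LPR[s]))` (in the sharper form `χ[s] ≤ c·ln(2/M^LPR[s])`).
`MOPT` is any value of the OPT miss rate, which always satisfies
`MOPT ≥ L^OPT[s]`. -/
theorem stmt11 :
    ∃ c : ℝ, 0 < c ∧
      ∀ (V C : ℕ) (s : ℕ → ℝ), 2 ≤ C → C < V →
        (∀ i, 0 ≤ s i) → (∑ j ∈ Finset.Icc 1 V, s j) = 1 →
        (∀ j, j < V → cumS s j < 1) →
        ∀ MOPT : ℝ, 0 < MOPT → LOPTc (cumS s) V C ≤ MOPT →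
          MLPR s V C / MOPT ≤ c * Real.log C ∧
          (1 / (C : ℝ) ≤ MLPR s V C →
            MLPR s V C / MOPT ≤ c * Real.log (2 / MLPR s V C)) := by
  refine ⟨20, by norm_num, ?_⟩
  intro V C s hC hCV hs hsum hSlt MOPT hM0 hML
  -- Basic facts on the cumulative distribution
  have hSV : cumS s V = 1 := hsum
  have hS0 : cumS s 0 = 0 := by simp [cumS]
  have hSnn : ∀ j, 0 ≤ cumS s j := fun j => Finset.sum_nonneg (fun i _ => hs i)
  have hSmono : ∀ {j k : ℕ}, j ≤ k → cumS s j ≤ cumS s k := by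
    intro j k h
    exact Finset.sum_le_sum_of_subset_of_nonneg
      (Finset.Icc_subset_Icc_right h) (fun i _ _ => hs i)
  have hSle1 : ∀ j, j ≤ V → cumS s j ≤ 1 := fun j h => hSV ▸ hSmono h
  -- The feasibility set of the `K-L` policies
  set F : Set ℝ := {x : ℝ | ∃ K L : ℕ, 1 ≤ K ∧ K < C ∧ C ≤ L ∧ L ≤ V ∧
    x = 1 - (cumS s K * ((L : ℝ) - C) + cumS s L * ((C : ℝ) - K)) / ((L : ℝ) - K)} with hF
  have hMLPR : MLPR s V C = sInf F := rfl
  have hnn : ∀ x ∈ F, (0:ℝ) ≤ x := by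
    rintro x ⟨K, L, hK1, hKC, hCL, hLV, rfl⟩
    have hKL : K < L := lt_of_lt_of_le hKC hCL
    have hLK : (0:ℝ) < (L:ℝ) - K := by
      have : (K:ℝ) < L := by exact_mod_cast hKL
      linarith
    have h1 : cumS s K ≤ 1 := hSle1 K (by omega)
    have h2 : cumS s L ≤ 1 := hSle1 L hLV
    have h3 : (0:ℝ) ≤ (L:ℝ) - C := by
      have : (C:ℝ) ≤ L := by exact_mod_cast hCL
      linarith
    have h4 : (0:ℝ) ≤ (C:ℝ) - K := by
      have : (K:ℝ) < C := by exact_mod_cast hKC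
      linarith
    have hdiv : (cumS s K * ((L:ℝ) - C) + cumS s L * ((C:ℝ) - K)) / ((L:ℝ) - K) ≤ 1 := by
      rw [div_le_one hLK]
      nlinarith [hSnn K, hSnn L]
    linarith
  have hBdd : BddBelow F := ⟨0, hnn⟩
  -- Interpolation constraints from the infimum
  have hkey : ∀ K L : ℕ, 1 ≤ K → K < C → C ≤ L → L ≤ V →
      MLPR s V C * ((L:ℝ) - K) ≤
        ((L:ℝ) - C) * (1 - cumS s K) + ((C:ℝ) - K) * (1 - cumS s L) := by
    intro K L hK1 hKC hCL hLV
    have hmem : (1 - (cumS s K * ((L : ℝ) - C) + cumS s L * ((C : ℝ) - K)) / ((L : ℝ) - K)) ∈ F :=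
      ⟨K, L, hK1, hKC, hCL, hLV, rfl⟩
    have hle := csInf_le hBdd hmem
    rw [← hMLPR] at hle
    have hKL : K < L := lt_of_lt_of_le hKC hCL
    have hLK : (0:ℝ) < (L:ℝ) - K := by
      have : (K:ℝ) < L := by exact_mod_cast hKL
      linarith
    have hid : (1 - (cumS s K * ((L:ℝ) - C) + cumS s L * ((C:ℝ) - K)) / ((L:ℝ) - K)) * ((L:ℝ) - K)
        = ((L:ℝ) - C) * (1 - cumS s K) + ((C:ℝ) - K) * (1 - cumS s L) := by
      field_simp
      ring
    calc MLPR s V C * ((L:ℝ) - K) ≤ _ * ((L:ℝ) - K) :=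
          mul_le_mul_of_nonneg_right hle hLK.le
      _ = _ := hid
  have hmnn : 0 ≤ MLPR s V C := by
    rw [hMLPR]
    refine le_csInf ⟨_, ⟨C - 1, C, by omega, by omega, le_refl C, by omega, rfl⟩⟩ hnn
  set m := MLPR s V C with hmdef
  have hCR : (2:ℝ) ≤ (C:ℝ) := by exact_mod_cast hC
  have hlog2 : (0.6931471803:ℝ) < Real.log 2 := Real.log_two_gt_d9
  have hlogC : Real.log 2 ≤ Real.log C := Real.log_le_log (by norm_num) hCR
  rcases eq_or_lt_of_le hmnn with h0 | hm0
  · -- degenerate case `m = 0`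
    constructor
    · rw [← h0, zero_div]
      nlinarith
    · intro hc
      exfalso
      have hpos : (0:ℝ) < 1 / C := by positivity
      rw [← h0] at hc
      linarith
  -- main case `0 < m`
  have hmC : m ≤ 1 - cumS s C := by
    have h := hkey (C - 1) C (by omega) (by omega) (le_refl C) (by omega)
    have hc : ((C - 1 : ℕ) : ℝ) = (C:ℝ) - 1 := by
      rw [Nat.cast_sub (by omega : 1 ≤ C)]; norm_num
    rw [hc] at h
    have e1 : (C:ℝ) - ((C:ℝ) - 1) = 1 := by ring
    rw [e1] at h
    linarith
  have hm1 : m ≤ 1 := by have := hSnn C; linarith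
  -- the threshold `D`
  set Dset : Set ℕ := {g | 1 ≤ g ∧ 1 - cumS s (C + g) ≤ m / 2} with hDset
  have hVmem : V - C ∈ Dset := by
    constructor
    · omega
    · have e : C + (V - C) = V := by omega
      rw [e, hSV]
      linarith
  set D : ℕ := sInf Dset with hDdef
  have hDmem : D ∈ Dset := Nat.sInf_mem ⟨_, hVmem⟩
  have hD1 : 1 ≤ D := hDmem.1
  have hDa : 1 - cumS s (C + D) ≤ m / 2 := hDmem.2
  have hDle : D ≤ V - C := Nat.sInf_le hVmem
  have hCD : C + D ≤ V := by omega
  have hDmin : ∀ g, 1 ≤ g → g < D → m / 2 < 1 - cumS s (C + g) := by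
    intro g h1 h2
    have hnot := Nat.notMem_of_lt_sInf (hDdef ▸ h2)
    simp only [hDset, Set.mem_setOf_eq, not_and, not_le] at hnot
    exact hnot h1
  have hDpos : (0:ℝ) < D := by exact_mod_cast hD1
  have hD1R : (1:ℝ) ≤ (D:ℝ) := by exact_mod_cast hD1
  -- `D ≥ m (C-1) / 2`
  have hD2 : m * ((C:ℝ) - 1) ≤ 2 * D := by
    have h := hkey 1 (C + D) (le_refl 1) (by omega) (by omega) hCD
    push_cast at h
    have h1 : 1 - cumS s 1 ≤ 1 := by have := hSnn 1; linarith
    have hC1 : (0:ℝ) ≤ (C:ℝ) - 1 := by linarith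
    nlinarith [mul_nonneg hm0.le (Nat.cast_nonneg D : (0:ℝ) ≤ D)]
  -- the sum over the left part
  have hA : ∑ j ∈ Finset.Ico 1 C, 1 / (1 - cumS s j) ≤
      (2 * (D:ℝ) / m) * (Real.log (2 * D + C) - Real.log (2 * D)) := by
    have step1 : ∑ j ∈ Finset.Ico 1 C, 1 / (1 - cumS s j) ≤
        ∑ j ∈ Finset.Ico 1 C, (2 * (D:ℝ) / m) * (1 / (2 * D + ((C - j : ℕ) : ℝ))) := by
      refine Finset.sum_le_sum ?_
      intro j hj
      rw [Finset.mem_Ico] at hj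
      have hj1 : 1 ≤ j := hj.1
      have hjC : j < C := hj.2
      have hcast : ((C - j : ℕ) : ℝ) = (C:ℝ) - j := by
        rw [Nat.cast_sub (by omega : j ≤ C)]
      have h := hkey j (C + D) hj1 hjC (by omega) hCD
      push_cast at h
      have hCj : (0:ℝ) < (C:ℝ) - j := by
        have : (j:ℝ) < C := by exact_mod_cast hjC
        linarith
      have hlow : m * (2 * D + ((C:ℝ) - j)) / (2 * D) ≤ 1 - cumS s j := by
        rw [div_le_iff₀ (by positivity)]
        nlinarith
      have hplow : (0:ℝ) < m * (2 * D + ((C:ℝ) - j)) / (2 * D) := by positivity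
      have hstep := one_div_le_one_div_of_le hplow hlow
      rw [one_div_div] at hstep
      rw [hcast]
      calc 1 / (1 - cumS s j) ≤ 2 * (D:ℝ) / (m * (2 * D + ((C:ℝ) - j))) := hstep
        _ = (2 * (D:ℝ) / m) * (1 / (2 * D + ((C:ℝ) - j))) := by
            rw [mul_one_div, div_div]
    have step2 : ∑ j ∈ Finset.Ico 1 C, (2 * (D:ℝ) / m) * (1 / (2 * D + ((C - j : ℕ) : ℝ))) =
        ∑ t ∈ Finset.Ico 1 C, (2 * (D:ℝ) / m) * (1 / (2 * D + (t : ℝ))) := by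
      refine Finset.sum_nbij' (fun j => C - j) (fun t => C - t) ?_ ?_ ?_ ?_ ?_
      · intro a ha; simp only [Finset.mem_Ico] at ha ⊢; omega
      · intro a ha; simp only [Finset.mem_Ico] at ha ⊢; omega
      · intro a ha; simp only [Finset.mem_Ico] at ha; omega
      · intro a ha; simp only [Finset.mem_Ico] at ha; omega
      · intro a ha; rfl
    have step3 : ∑ t ∈ Finset.Ico 1 C, (2 * (D:ℝ) / m) * (1 / (2 * D + (t : ℝ))) =
        (2 * (D:ℝ) / m) * ∑ t ∈ Finset.Ico 1 C, 1 / (2 * D + (t : ℝ)) := by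
      rw [Finset.mul_sum]
    have hharm : ∑ t ∈ Finset.Ico 1 C, 1 / (2 * (D:ℝ) + t) ≤
        Real.log (2 * D + C) - Real.log (2 * D) := by
      have h2D : (1:ℝ) ≤ 2 * (D:ℝ) := by linarith
      have h := aux_harm (2 * (D:ℝ)) h2D (C - 1)
      rw [show C - 1 + 1 = C from by omega] at h
      refine h.trans ?_
      have hlog : Real.log (2 * (D:ℝ) + ((C - 1 : ℕ) : ℝ)) ≤ Real.log (2 * D + C) := by
        refine Real.log_le_log (by positivity) ?_
        have : ((C - 1 : ℕ) : ℝ) ≤ (C : ℝ) := by exact_mod_cast Nat.sub_le C 1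
        linarith
      linarith
    calc ∑ j ∈ Finset.Ico 1 C, 1 / (1 - cumS s j) ≤ _ := step1
      _ = _ := step2
      _ = _ := step3
      _ ≤ (2 * (D:ℝ) / m) * (Real.log (2 * D + C) - Real.log (2 * D)) := by
          refine mul_le_mul_of_nonneg_left hharm (by positivity)
  -- the sum over the middle part
  have hB : ∑ j ∈ Finset.Ico C (C + D), 1 / (1 - cumS s j) ≤ (D:ℝ) * (2 / m) := by
    have hterm : ∀ j ∈ Finset.Ico C (C + D), 1 / (1 - cumS s j) ≤ 2 / m := by
      intro j hj
      rw [Finset.mem_Ico] at hj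
      have hlow : m / 2 ≤ 1 - cumS s j := by
        rcases eq_or_lt_of_le hj.1 with h | h
        · rw [← h]; linarith
        · have hg := hDmin (j - C) (by omega) (by omega)
          rw [show C + (j - C) = j from by omega] at hg
          linarith
      have := one_div_le_one_div_of_le (by positivity) hlow
      rw [one_div_div] at this
      linarith
    have h := Finset.sum_le_card_nsmul _ _ _ hterm
    rw [Nat.card_Ico] at h
    rw [show C + D - C = D from by omega] at h
    rw [nsmul_eq_mul] at h
    exact h
  -- assembling the total sum
  set T : ℝ := ∑ j ∈ Finset.range (C + D), 1 / (1 - cumS s j) with hT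
  set Λ : ℝ := Real.log (2 * D + C) - Real.log (2 * D) with hΛ
  have hΛ0 : 0 ≤ Λ := by
    have : Real.log (2 * (D:ℝ)) ≤ Real.log (2 * D + C) :=
      Real.log_le_log (by positivity) (by linarith)
    rw [hΛ]; linarith
  have hsplit : T = 1 / (1 - cumS s 0) + ∑ j ∈ Finset.Ico 1 C, 1 / (1 - cumS s j)
      + ∑ j ∈ Finset.Ico C (C + D), 1 / (1 - cumS s j) := by
    rw [hT, Finset.range_eq_Ico,
      ← Finset.sum_Ico_consecutive _ (Nat.zero_le C) (Nat.le_add_right C D),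
      Finset.sum_eq_sum_Ico_succ_bot (by omega : 0 < C)]
  have hTle : T ≤ 1 + (2 * (D:ℝ) / m) * Λ + (D:ℝ) * (2 / m) := by
    have h0 : 1 / (1 - cumS s 0) = 1 := by rw [hS0]; norm_num
    rw [hsplit, h0]
    linarith
  have hTpos : 0 < T := by
    rw [hT]
    refine Finset.sum_pos ?_ ⟨0, Finset.mem_range.mpr (by omega)⟩
    intro j hj
    rw [Finset.mem_range] at hj
    have h1 : 0 < 1 - cumS s j := by have := hSlt j (by omega); linarith
    positivity
  have hmT : m * T ≤ (D:ℝ) * (3 + 2 * Λ) := by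
    have h1 := mul_le_mul_of_nonneg_left hTle hm0.le
    have e : m * (1 + (2 * (D:ℝ) / m) * Λ + (D:ℝ) * (2 / m)) = m + 2 * D * Λ + 2 * D := by
      field_simp
    rw [e] at h1
    nlinarith
  -- the `LOPT` lower bound at `G = D`
  have hLB : (D:ℝ) / T ≤ LOPTc (cumS s) V C := by
    refine le_csSup (((Set.finite_Icc 1 (V - C)).image _).bddAbove) ?_
    exact ⟨D, Set.mem_Icc.mpr ⟨hD1, hDle⟩, rfl⟩
  have hmle : m ≤ (3 + 2 * Λ) * MOPT := by
    have h1 : m ≤ (3 + 2 * Λ) * ((D:ℝ) / T) := by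
      rw [← mul_div_assoc, le_div_iff₀ hTpos]
      linarith [hmT]
    calc m ≤ (3 + 2 * Λ) * ((D:ℝ) / T) := h1
      _ ≤ (3 + 2 * Λ) * MOPT :=
        mul_le_mul_of_nonneg_left (hLB.trans hML) (by linarith)
  have hratio : m / MOPT ≤ 3 + 2 * Λ := (div_le_iff₀ hM0).mpr hmle
  constructor
  · -- `Λ ≤ 2 log C`
    have hC4 : (4:ℝ) ≤ (C:ℝ) * C := by nlinarith
    have q1 : 4 * (D:ℝ) ≤ (D:ℝ) * ((C:ℝ) * C) := by
      have := mul_le_mul_of_nonneg_left hC4 hDpos.le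
      linarith
    have q2 : (C:ℝ) * C ≤ (D:ℝ) * ((C:ℝ) * C) := by
      have := mul_le_mul_of_nonneg_right hD1R (by positivity : (0:ℝ) ≤ (C:ℝ) * C)
      linarith
    have q3 : (C:ℝ) ≤ (C:ℝ) * C := by nlinarith
    have h1 : Real.log (2 * (D:ℝ) + C) ≤ Real.log (2 * D * ((C:ℝ) * C)) := by
      refine Real.log_le_log (by positivity) ?_
      linarith [q1, q2, q3]
    have h2 : Real.log (2 * (D:ℝ) * ((C:ℝ) * C)) =
        Real.log (2 * (D:ℝ)) + Real.log ((C:ℝ) * C) :=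
      Real.log_mul (by positivity) (by positivity)
    have h3 : Real.log ((C:ℝ) * C) = Real.log C + Real.log C :=
      Real.log_mul (by positivity) (by positivity)
    have hΛC : Λ ≤ 2 * Real.log C := by rw [hΛ]; linarith
    linarith
  · -- `Λ ≤ log 3 - log m`
    intro _
    have p1 : m * (D:ℝ) ≤ D := by nlinarith
    have h1 : Real.log (2 * (D:ℝ) + C) ≤ Real.log (2 * D * (3 / m)) := by
      refine Real.log_le_log (by positivity) ?_
      rw [show 2 * (D:ℝ) * (3 / m) = 6 * D / m from by ring, le_div_iff₀ hm0]
      nlinarith [p1, hD2, hm1, hD1R]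
    have h2 : Real.log (2 * (D:ℝ) * (3 / m)) =
        Real.log (2 * (D:ℝ)) + (Real.log 3 - Real.log m) := by
      rw [Real.log_mul (by positivity) (by positivity),
        Real.log_div (by norm_num) (ne_of_gt hm0)]
    have hΛm : Λ ≤ Real.log 3 - Real.log m := by rw [hΛ]; linarith
    have hlog3 : Real.log 3 ≤ 2 * Real.log 2 := by
      have h34 : Real.log 3 ≤ Real.log 4 := Real.log_le_log (by norm_num) (by norm_num)
      have h4 : Real.log 4 = 2 * Real.log 2 := by
        rw [show (4:ℝ) = 2 * 2 by norm_num, Real.log_mul (by norm_num) (by norm_num)]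
        ring
      linarith
    have hlogm : Real.log m ≤ 0 := Real.log_nonpos hm0.le hm1
    have hlog2m : Real.log (2 / m) = Real.log 2 - Real.log m :=
      Real.log_div (by norm_num) (ne_of_gt hm0)
    rw [hlog2m]
    linarith
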